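/- If p and q are distinct odd primes, then T(pq) = 4(p + q) - 6pq - 3. -/

import Mathlib

open Finset

/-- `T(h,k) := ∑_{j=1}^{2k-1} (-1)^{j+1+⌊hj/k⌋}`. -/
def Tpair (h k : ℕ) : ℤ := ∑ j ∈ Finset.Icc 1 (2 * k - 1), (-1 : ℤ) ^ (j + 1 + h * j / k)

/-- `T(k) := ∑_{h=1}^{2k-1} T(h,k)`. -/
def Tsum (k : ℕ) : ℤ := ∑ h ∈ Finset.Icc 1 (2 * k - 1), Tpair h k


lemma count_odd_dvd (d N : ℕ) (hd : Odd d) (hN : 1 ≤ N) :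
    ((Finset.Icc 1 (2 * (d * N) - 1)).filter (fun h => ¬ 2 ∣ h ∧ d ∣ h)).card = N := by
  have hd1 : 1 ≤ d := hd.pos
  have key : ((Finset.Icc 1 (2 * (d * N) - 1)).filter (fun h => ¬ 2 ∣ h ∧ d ∣ h)).card
      = (Finset.Icc 1 N).card := by
    apply Finset.card_bij' (fun h _ => (h / d + 1) / 2) (fun u _ => d * (2 * u - 1))
    · intro h hm
      simp only [Finset.mem_filter, Finset.mem_Icc] at hm ⊢
      obtain ⟨⟨h1, h2⟩, hodd, m, rfl⟩ := hm
      have hm1 : ¬ 2 ∣ m := by rintro ⟨c, rfl⟩; exact hodd ⟨d * c, by ring⟩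
      have hm0 : m ≠ 0 := by rintro rfl; simp at h1
      rw [Nat.mul_div_cancel_left _ (by omega)]
      have hb : m ≤ 2 * N - 1 := by
        by_contra hcon
        have e1 : d * (2 * N) ≤ d * m := Nat.mul_le_mul_left d (by omega)
        have e2 : d * (2 * N) = 2 * (d * N) := by ring
        omega
      omega
    · intro u hu
      simp only [Finset.mem_filter, Finset.mem_Icc] at hu ⊢
      obtain ⟨h1, h2⟩ := hu
      have e1 : 1 * 1 ≤ d * (2 * u - 1) := Nat.mul_le_mul hd1 (by omega)
      have e2 : d * (2 * u - 1) ≤ d * (2 * N - 1) := Nat.mul_le_mul_left d (by omega)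
      have h2N : 2 * N - 1 + 1 = 2 * N := by omega
      have e3 : d * (2 * N - 1) + d = 2 * (d * N) := by
        calc d * (2 * N - 1) + d = d * ((2 * N - 1) + 1) := by ring
          _ = d * (2 * N) := by rw [h2N]
          _ = 2 * (d * N) := by ring
      refine ⟨⟨by omega, by omega⟩, ?_, ⟨2 * u - 1, rfl⟩⟩
      have hoddm : Odd (d * (2 * u - 1)) := hd.mul ⟨u - 1, by omega⟩
      rw [Nat.odd_iff] at hoddm
      rintro ⟨c, hc⟩
      omega
    · intro h hm
      simp only [Finset.mem_filter, Finset.mem_Icc] at hm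
      obtain ⟨⟨h1, h2⟩, hodd, m, rfl⟩ := hm
      have hm1 : ¬ 2 ∣ m := by rintro ⟨c, rfl⟩; exact hodd ⟨d * c, by ring⟩
      rw [Nat.mul_div_cancel_left _ (by omega)]
      congr 1
      omega
    · intro u hu
      simp only [Finset.mem_Icc] at hu
      rw [Nat.mul_div_cancel_left _ (by omega)]
      omega
  rw [key, Nat.card_Icc]
  omega

lemma gcd_formula (p q h : ℕ) (hp : p.Prime) (hq : q.Prime) (hne : p ≠ q) :
    (Nat.gcd h (p * q) : ℤ) = (if p ∣ h then (p : ℤ) else 1) * (if q ∣ h then (q : ℤ) else 1) := by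
  have hcop : Nat.Coprime p q := (Nat.coprime_primes hp hq).mpr hne
  by_cases hph : p ∣ h <;> by_cases hqh : q ∣ h <;> simp only [hph, hqh, if_true, if_false,
    mul_one, one_mul]
  · rw [Nat.gcd_eq_right (hcop.mul_dvd_of_dvd_of_dvd hph hqh)]; push_cast; ring
  · have h1 : Nat.gcd h (p * q) ∣ p := by
      refine Nat.Coprime.dvd_of_dvd_mul_right ?_ (Nat.gcd_dvd_right h (p*q))
      exact Nat.Coprime.symm ((hq.coprime_iff_not_dvd).mpr
        (fun hd => hqh (hd.trans (Nat.gcd_dvd_left h (p*q)))))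
    have h2 : p ∣ Nat.gcd h (p * q) := Nat.dvd_gcd hph (dvd_mul_right p q)
    rw [Nat.dvd_antisymm h1 h2]
  · have h1 : Nat.gcd h (p * q) ∣ q := by
      refine Nat.Coprime.dvd_of_dvd_mul_left ?_ (Nat.gcd_dvd_right h (p*q))
      exact Nat.Coprime.symm ((hp.coprime_iff_not_dvd).mpr
        (fun hd => hph (hd.trans (Nat.gcd_dvd_left h (p*q)))))
    have h2 : q ∣ Nat.gcd h (p * q) := Nat.dvd_gcd hqh (dvd_mul_left q p)
    rw [Nat.dvd_antisymm h1 h2]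
  · have h1 : Nat.gcd h (p * q) ∣ p := by
      refine Nat.Coprime.dvd_of_dvd_mul_right ?_ (Nat.gcd_dvd_right h (p*q))
      exact Nat.Coprime.symm ((hq.coprime_iff_not_dvd).mpr
        (fun hd => hqh (hd.trans (Nat.gcd_dvd_left h (p*q)))))
    rcases (Nat.Prime.eq_one_or_self_of_dvd hp _ h1) with h3 | h3
    · simp [h3]
    · exact absurd (h3 ▸ Nat.gcd_dvd_left h (p*q)) hph


lemma Tpair_closed (h k : ℕ) (hh : 1 ≤ h) (hk : Odd k) :
    Tpair h k = if 2 ∣ h then 1 else 1 - 2 * (Nat.gcd h k : ℤ) := by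
  simp only [Tpair]
  have hk0 : 0 < k := hk.pos
  set d := Nat.gcd h k with hd
  have hd0 : 0 < d := Nat.gcd_pos_of_pos_right h hk0
  set k' := k / d with hk'
  set h' := h / d with hh'
  have hdk : d * k' = k := Nat.mul_div_cancel' (Nat.gcd_dvd_right h k)
  have hdh : d * h' = h := Nat.mul_div_cancel' (Nat.gcd_dvd_left h k)
  have hcop : Nat.Coprime h' k' := Nat.coprime_div_gcd_div_gcd hd0
  have hk'0 : 0 < k' := by
    rcases Nat.eq_zero_or_pos k' with h0 | h0
    · rw [h0, mul_zero] at hdk; omega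
    · exact h0
  have hk'odd : Odd k' := by
    rcases Nat.even_or_odd k' with he | ho
    · exfalso; exact (Nat.not_odd_iff_even.mpr (hdk ▸ (he.mul_left d))) hk
    · exact ho
  have hdodd : Odd d := by
    rcases Nat.even_or_odd d with he | ho
    · exfalso; exact (Nat.not_odd_iff_even.mpr (hdk ▸ (he.mul_right k'))) hk
    · exact ho
  rw [← Finset.sum_filter_add_sum_filter_not (Finset.Icc 1 (2 * k - 1)) (fun j => k' ∣ j)]
  have hzero : ∑ j ∈ (Finset.Icc 1 (2 * k - 1)).filter (fun j => ¬ k' ∣ j),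
      (-1 : ℤ) ^ (j + 1 + h * j / k) = 0 := by
    apply Finset.sum_involution (fun j _ => 2 * k - j)
    · intro j hj
      simp only [Finset.mem_filter, Finset.mem_Icc] at hj
      obtain ⟨⟨hj1, hj2⟩, hjnd⟩ := hj
      -- k does not divide h * j
      have hknd : ¬ k ∣ h * j := by
        rintro ⟨c, hc⟩
        apply hjnd
        have : d * (h' * j) = d * (k' * c) := by
          calc d * (h' * j) = h * j := by rw [← hdh]; ring
            _ = k * c := hc
            _ = d * (k' * c) := by rw [← hdk]; ring
        have h2 : k' ∣ h' * j := ⟨c, Nat.eq_of_mul_eq_mul_left hd0 this⟩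
        exact (Nat.Coprime.dvd_of_dvd_mul_left hcop.symm h2)
      have e1 := Nat.div_add_mod (h * j) k
      set q₀ := h * j / k with hq₀
      set r := h * j % k with hr
      have hr1 : 0 < r := Nat.pos_of_ne_zero (fun h0 => hknd (Nat.dvd_of_mod_eq_zero h0))
      have hr2 : r < k := Nat.mod_lt _ hk0
      -- q₀ < 2h
      have hq2h : q₀ + 1 ≤ 2 * h := by
        have b1 : h * j ≤ h * (2 * k - 1) := Nat.mul_le_mul_left h hj2
        have b2 : h * (2 * k - 1) + h = 2 * (k * h) := by
          calc h * (2 * k - 1) + h = h * ((2 * k - 1) + 1) := by ring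
            _ = h * (2 * k) := by rw [show 2 * k - 1 + 1 = 2 * k from by omega]
            _ = 2 * (k * h) := by ring
        have b3 : k * q₀ < k * (2 * h) := by
          have : k * (2 * h) = 2 * (k * h) := by ring
          omega
        exact Nat.lt_of_mul_lt_mul_left b3
      set s := 2 * h - q₀ - 1 with hs
      have hss : s + q₀ + 1 = 2 * h := by omega
      have e2 : h * (2 * k - j) + h * j = 2 * (k * h) := by
        calc h * (2 * k - j) + h * j = h * ((2 * k - j) + j) := by ring
          _ = h * (2 * k) := by rw [show 2 * k - j + j = 2 * k from by omega]
          _ = 2 * (k * h) := by ring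
      have e3 : k * s + k * q₀ + k = 2 * (k * h) := by
        calc k * s + k * q₀ + k = k * (s + q₀ + 1) := by ring
          _ = k * (2 * h) := by rw [hss]
          _ = 2 * (k * h) := by ring
      have e4 : h * (2 * k - j) = k * s + (k - r) := by omega
      have e5 : h * (2 * k - j) / k = s := by
        rw [e4, Nat.mul_add_div hk0, Nat.div_eq_of_lt (by omega)]
        omega
      -- parity
      have hparity : ((2 * k - j) + 1 + h * (2 * k - j) / k) % 2
          = (j + 1 + q₀ + 1) % 2 := by rw [e5]; omega
      rcases Nat.even_or_odd (j + 1 + q₀) with hA | hA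
      · have hB : Odd ((2 * k - j) + 1 + h * (2 * k - j) / k) := by
          rw [Nat.odd_iff, hparity]
          have := Nat.even_iff.mp hA
          omega
        rw [hA.neg_one_pow, hB.neg_one_pow]; ring
      · have hB : Even ((2 * k - j) + 1 + h * (2 * k - j) / k) := by
          rw [Nat.even_iff, hparity]
          have := Nat.odd_iff.mp hA
          omega
        rw [hA.neg_one_pow, hB.neg_one_pow]; ring
    · intro j hj _
      simp only [Finset.mem_filter, Finset.mem_Icc] at hj
      obtain ⟨⟨hj1, hj2⟩, hjnd⟩ := hj
      intro hcon
      have hjk : j = k := by omega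
      exact hjnd (hjk ▸ ⟨d, by rw [← hdk]; ring⟩)
    · intro j hj
      simp only [Finset.mem_filter, Finset.mem_Icc] at hj ⊢
      obtain ⟨⟨hj1, hj2⟩, hjnd⟩ := hj
      refine ⟨⟨by omega, by omega⟩, fun hdvd => hjnd ?_⟩
      have h2k : k' ∣ 2 * k := ⟨2 * d, by rw [← hdk]; ring⟩
      have hsub := Nat.dvd_sub h2k hdvd
      rwa [show 2 * k - (2 * k - j) = j from by omega] at hsub
    · intro j hj
      simp only [Finset.mem_filter, Finset.mem_Icc] at hj
      omega
  rw [hzero, add_zero]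
  have himg : ∑ j ∈ (Finset.Icc 1 (2 * k - 1)).filter (fun j => k' ∣ j),
      (-1 : ℤ) ^ (j + 1 + h * j / k)
      = ∑ t ∈ Finset.Icc 1 (2 * d - 1), (-1 : ℤ) ^ (k' * t + 1 + h' * t) := by
    apply Finset.sum_bij' (fun j _ => j / k') (fun t _ => k' * t)
    · -- hi
      intro j hj
      simp only [Finset.mem_filter, Finset.mem_Icc] at hj ⊢
      obtain ⟨⟨hj1, hj2⟩, c, rfl⟩ := hj
      rw [Nat.mul_div_cancel_left _ hk'0]
      have hc0 : c ≠ 0 := by rintro rfl; simp at hj1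
      have hub : c ≤ 2 * d - 1 := by
        by_contra hcon
        have e1 : k' * (2 * d) ≤ k' * c := Nat.mul_le_mul_left _ (by omega)
        have e2 : k' * (2 * d) = 2 * k := by rw [← hdk]; ring
        omega
      exact ⟨by omega, hub⟩
    · -- hj
      intro t ht
      simp only [Finset.mem_filter, Finset.mem_Icc] at ht ⊢
      obtain ⟨ht1, ht2⟩ := ht
      have e1 : 1 * 1 ≤ k' * t := Nat.mul_le_mul (by omega) ht1
      have e2 : k' * t ≤ k' * (2 * d - 1) := Nat.mul_le_mul_left _ ht2
      have e3 : k' * (2 * d - 1) + k' = 2 * k := by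
        calc k' * (2 * d - 1) + k' = k' * ((2 * d - 1) + 1) := by ring
          _ = k' * (2 * d) := by rw [show 2 * d - 1 + 1 = 2 * d from by omega]
          _ = 2 * k := by rw [← hdk]; ring
      exact ⟨⟨by omega, by omega⟩, ⟨t, rfl⟩⟩
    · -- left_inv
      intro j hj
      simp only [Finset.mem_filter, Finset.mem_Icc] at hj
      obtain ⟨_, c, rfl⟩ := hj
      rw [Nat.mul_div_cancel_left _ hk'0]
    · -- right_inv
      intro t ht
      rw [Nat.mul_div_cancel_left _ hk'0]
    · -- values
      intro j hj
      simp only [Finset.mem_filter, Finset.mem_Icc] at hj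
      obtain ⟨_, c, rfl⟩ := hj
      rw [Nat.mul_div_cancel_left _ hk'0]
      have e1 : h * (k' * c) = k * (h' * c) := by rw [← hdh, ← hdk]; ring
      rw [e1, Nat.mul_div_cancel_left _ (by omega)]
  rw [himg]
  obtain ⟨b, hb⟩ := hk'odd
  by_cases h2 : 2 ∣ h
  · simp only [h2, if_true]
    have h2' : 2 ∣ h' := by
      have hcop2 : Nat.Coprime 2 d := Nat.coprime_two_left.mpr hdodd
      exact hcop2.dvd_of_dvd_mul_left (hdh ▸ h2)
    obtain ⟨a, ha⟩ := h2'
    have hterm : ∀ t ∈ Finset.Icc 1 (2 * d - 1), (-1 : ℤ) ^ (k' * t + 1 + h' * t)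
        = (-1 : ℤ) ^ (t + 1) := by
      intro t _
      have he : k' * t + 1 + h' * t = 2 * (b * t + a * t) + (t + 1) := by
        rw [ha, hb]; ring
      rw [he, pow_add, Even.neg_one_pow ⟨b * t + a * t, by ring⟩, one_mul]
    rw [Finset.sum_congr rfl hterm]
    rw [show Finset.Icc 1 (2 * d - 1) = Finset.Ico 1 (2 * d) from by
      rw [← Finset.Ico_add_one_right_eq_Icc]; congr 1; omega]
    rw [Finset.sum_Ico_eq_sum_range]
    have h1 : ∀ i ∈ Finset.range (2 * d - 1), (-1 : ℤ) ^ (1 + i + 1) = (-1 : ℤ) ^ i := by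
      intro i _; rw [show 1 + i + 1 = i + 2 from by omega, pow_add]; norm_num
    rw [Finset.sum_congr rfl h1, neg_one_geom_sum, if_neg]
    simp only [Nat.even_iff]
    omega
  · simp only [h2, if_false]
    have h2' : ¬ 2 ∣ h' := fun ⟨c, hc⟩ => h2 ⟨d * c, by rw [← hdh, hc]; ring⟩
    have hodd' : Odd h' := Nat.odd_iff.mpr (by omega)
    obtain ⟨a, ha⟩ := hodd'
    have hterm : ∀ t ∈ Finset.Icc 1 (2 * d - 1), (-1 : ℤ) ^ (k' * t + 1 + h' * t)
        = -1 := by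
      intro t _
      have he : k' * t + 1 + h' * t = 2 * (b * t + a * t + t) + 1 := by
        rw [ha, hb]; ring
      rw [he]
      exact Odd.neg_one_pow ⟨b * t + a * t + t, by ring⟩
    rw [Finset.sum_congr rfl hterm, Finset.sum_const, Nat.card_Icc]
    simp only [nsmul_eq_mul, mul_neg, mul_one]
    rw [show 2 * d - 1 + 1 - 1 = 2 * d - 1 from by omega]
    rw [Nat.cast_sub (by omega : 1 ≤ 2 * d)]
    push_cast
    ring


theorem stmt_16 (p q : ℕ) (hp : p.Prime) (hq : q.Prime) (hpo : Odd p) (hqo : Odd q)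
    (hne : p ≠ q) :
    Tsum (p * q) = 4 * ((p : ℤ) + q) - 6 * (p : ℤ) * q - 3 := by
  have hcop : Nat.Coprime p q := (Nat.coprime_primes hp hq).mpr hne
  have hpqodd : Odd (p * q) := hpo.mul hqo
  have hp1 : 1 ≤ p := hp.pos
  have hq1 : 1 ≤ q := hq.pos
  have key : ∀ h ∈ Finset.Icc 1 (2 * (p * q) - 1), Tpair h (p * q) =
      1 - 2 * (if ¬ 2 ∣ h ∧ 1 ∣ h then (1 : ℤ) else 0)
        - 2 * ((p : ℤ) - 1) * (if ¬ 2 ∣ h ∧ p ∣ h then 1 else 0)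
        - 2 * ((q : ℤ) - 1) * (if ¬ 2 ∣ h ∧ q ∣ h then 1 else 0)
        - 2 * (((p : ℤ) - 1) * ((q : ℤ) - 1)) * (if ¬ 2 ∣ h ∧ p * q ∣ h then 1 else 0) := by
    intro h hm
    simp only [Finset.mem_Icc] at hm
    rw [Tpair_closed h (p * q) hm.1 hpqodd]
    have hpq_iff : p * q ∣ h ↔ (p ∣ h ∧ q ∣ h) := by
      constructor
      · intro hd; exact ⟨(dvd_mul_right p q).trans hd, (dvd_mul_left q p).trans hd⟩
      · intro ⟨h1, h2⟩; exact hcop.mul_dvd_of_dvd_of_dvd h1 h2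
    by_cases h2 : 2 ∣ h
    · simp [h2]
    · rw [gcd_formula p q h hp hq hne]
      by_cases hp2 : p ∣ h <;> by_cases hq2 : q ∣ h <;>
        simp [h2, hp2, hq2, hpq_iff, one_dvd] <;> ring
  rw [Tsum, Finset.sum_congr rfl key]
  simp only [Finset.sum_sub_distrib, ← Finset.mul_sum, Finset.sum_const, Finset.sum_boole,
    nsmul_eq_mul, mul_one]
  have c1 := count_odd_dvd 1 (p * q) odd_one (Nat.mul_pos hp1 hq1)
  rw [one_mul] at c1
  have cp := count_odd_dvd p q hpo hq1
  have cq := count_odd_dvd q p hqo hp1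
  rw [mul_comm q p] at cq
  have cpq := count_odd_dvd (p * q) 1 hpqodd le_rfl
  rw [mul_one] at cpq
  have hone : ∀ h : ℕ, (¬ 2 ∣ h ∧ 1 ∣ h) ↔ (¬ 2 ∣ h ∧ (1:ℕ) ∣ h) := fun _ => Iff.rfl
  rw [show (Finset.filter (fun h => ¬2 ∣ h ∧ 1 ∣ h) (Finset.Icc 1 (2 * (p * q) - 1))).card
      = p * q from c1]
  rw [show (Finset.filter (fun h => ¬2 ∣ h ∧ p ∣ h) (Finset.Icc 1 (2 * (p * q) - 1))).card
      = q from cp]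
  rw [show (Finset.filter (fun h => ¬2 ∣ h ∧ q ∣ h) (Finset.Icc 1 (2 * (p * q) - 1))).card
      = p from cq]
  rw [show (Finset.filter (fun h => ¬2 ∣ h ∧ p * q ∣ h) (Finset.Icc 1 (2 * (p * q) - 1))).card
      = 1 from cpq]
  rw [Nat.card_Icc]
  have hcast : ((2 * (p * q) - 1 + 1 - 1 : ℕ) : ℤ) = 2 * (p : ℤ) * q - 1 := by
    rw [show 2 * (p * q) - 1 + 1 - 1 = 2 * (p * q) - 1 from by omega,
      Nat.cast_sub (by nlinarith : 1 ≤ 2 * (p * q))]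
    push_cast; ring
  rw [hcast]
  push_cast
  ring
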